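/- Let B be a symmetric m×m matrix over the field 𝔽₂ and let d ∈ 𝔽₂^m be its diagonal vector, d_i = B_{ii}. Then the linear system B c = d has a solution c ∈ 𝔽₂^m. (In topological terms: every framed link L admits a characteristic sublink K, i.e. a sublink with L_i · K = L_i · L_i mod 2 for all components L_i.) -/

import Mathlib

lemma char2_quadratic (m : ℕ) (B : Matrix (Fin m) (Fin m) (ZMod 2)) (hB : B.IsSymm)
    (x : Fin m → ZMod 2) :
    dotProduct x (B.mulVec x) = ∑ i, x i * B i i := by
  classical
  have h2 : ∀ t : ZMod 2, t + t = 0 := by decide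
  have hsq : ∀ t : ZMod 2, t * t = t := by decide
  simp only [dotProduct, Matrix.mulVec, dotProduct, Finset.mul_sum]
  rw [← Finset.sum_product']
  have hsplit : (Finset.univ ×ˢ Finset.univ : Finset (Fin m × Fin m)) =
      Finset.univ.diag ∪ Finset.univ.offDiag := by
    rw [Finset.diag_union_offDiag]
  rw [hsplit, Finset.sum_union (Finset.disjoint_diag_offDiag _)]
  have hoff : ∑ p ∈ Finset.univ.offDiag, x p.1 * (B p.1 p.2 * x p.2) = 0 := by
    apply Finset.sum_involution (fun p _ => (p.2, p.1))
    · intro a ha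
      have hsym : B a.2 a.1 = B a.1 a.2 := hB.apply a.1 a.2
      have : x a.2 * (B a.2 a.1 * x a.1) = x a.1 * (B a.1 a.2 * x a.2) := by
        rw [hsym]; ring
      rw [this]
      exact h2 _
    · intro a ha hne h
      rcases a with ⟨i, j⟩
      have hji : j = i := congrArg Prod.fst h
      have hij : i ≠ j := (Finset.mem_offDiag.mp ha).2.2
      exact hij hji.symm
    · intro a ha
      rcases Finset.mem_offDiag.mp ha with ⟨_, _, hne⟩
      exact Finset.mem_offDiag.mpr ⟨Finset.mem_univ _, Finset.mem_univ _, fun h => hne h.symm⟩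
    · intro a ha; rfl
  rw [hoff, add_zero, Finset.sum_diag]
  exact Finset.sum_congr rfl fun i _ => by rw [mul_comm (B i i), ← mul_assoc, hsq]

theorem stmt_11 (m : ℕ) (B : Matrix (Fin m) (Fin m) (ZMod 2)) (hB : B.IsSymm) :
    ∃ c : Fin m → ZMod 2, B.mulVec c = fun i => B i i := by
  classical
  set d : Fin m → ZMod 2 := fun i => B i i with hd
  by_contra hcon
  push_neg at hcon
  have hdnotin : d ∉ LinearMap.range B.mulVecLin := by
    rintro ⟨c, hc⟩
    exact hcon c hc
  obtain ⟨f, hfd, hf0⟩ := (LinearMap.range B.mulVecLin).exists_dual_map_eq_bot_of_notMem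
    hdnotin inferInstance
  set x : Fin m → ZMod 2 := fun i => f (fun j => if i = j then 1 else 0) with hx
  have hfrep : ∀ v : Fin m → ZMod 2, f v = dotProduct v x := by
    intro v
    rw [LinearMap.pi_apply_eq_sum_univ f v]
    simp [dotProduct, hx, smul_eq_mul]
  have hker : ∀ v, f (B.mulVec v) = 0 := by
    intro v
    have hmem : B.mulVec v ∈ LinearMap.range B.mulVecLin := ⟨v, rfl⟩
    have := Submodule.mem_map_of_mem (f := f) hmem
    rw [hf0] at this
    exact (Submodule.mem_bot _).mp this
  have hxBx : dotProduct x (B.mulVec x) = 0 := by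
    rw [dotProduct_comm, ← hfrep]
    exact hker x
  have hq := char2_quadratic m B hB x
  rw [hxBx] at hq
  have hfd' : f d = dotProduct d x := hfrep d
  have hdx : dotProduct d x = ∑ i, x i * B i i := by
    simp [dotProduct, hd, mul_comm]
  rw [hdx, ← hq] at hfd'
  exact hfd hfd'
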